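/- Let f : R^d -> R be differentiable with L-Lipschitz continuous gradient, let x in R^d, let N be a norm on R^d, let A be a symmetric positive definite matrix, and let 0 < alpha <= 2, eta > 0, rho > 0, sigma >= 0, R in R. Let g_tilde be an integrable random vector in R^d satisfying E[<g_tilde, nabla f(x)>] >= N(nabla f(x))^alpha + R and E ||g_tilde||_2^2 <= rho ||nabla f(x)||_A^2 + sigma^2. Then eta * ( N(nabla f(x))^alpha - (L * eta * rho / 2) * ||nabla f(x)||_A^2 ) <= f(x) - E[f(x - eta * g_tilde)] - eta * R + (L * eta^2 * sigma^2) / 2. -/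

import Mathlib

open MeasureTheory Finset

/-- The quadratic form `‖y‖_A² = yᵀ A y` associated with a matrix `A`. -/
noncomputable def quadForm {d : ℕ} (A : Matrix (Fin d) (Fin d) ℝ)
    (y : EuclideanSpace ℝ (Fin d)) : ℝ :=
  ∑ i, ∑ j, y i * A i j * y j

lemma descent_lemma {d : ℕ} (f : EuclideanSpace ℝ (Fin d) → ℝ)
    (Gf : EuclideanSpace ℝ (Fin d) → EuclideanSpace ℝ (Fin d))
    (Lc : ℝ) (hLc : 0 ≤ Lc)
    (hgrad : ∀ y, HasGradientAt f (Gf y) y)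
    (hLip : ∀ y z, ‖Gf y - Gf z‖ ≤ Lc * ‖y - z‖)
    (x v : EuclideanSpace ℝ (Fin d)) :
    f (x + v) ≤ f x + inner ℝ (Gf x) v + Lc / 2 * ‖v‖ ^ 2 := by
  set φ : ℝ → ℝ := fun t => f (x + t • v) - t * inner ℝ (Gf x) v - Lc / 2 * ‖v‖ ^ 2 * t ^ 2 with hφ
  have hline : ∀ t : ℝ, HasDerivAt (fun t : ℝ => x + t • v) v t := fun t =>
    by simpa using ((hasDerivAt_id t).smul_const v).const_add x
  have hφ' : ∀ t : ℝ, HasDerivAt φ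
      ((inner ℝ (Gf (x + t • v)) v : ℝ) - inner ℝ (Gf x) v - Lc / 2 * ‖v‖ ^ 2 * (2 * t)) t := by
    intro t
    have h1 : HasDerivAt (fun t : ℝ => f (x + t • v)) (inner ℝ (Gf (x + t • v)) v) t := by
      have := ((hgrad (x + t • v)).hasFDerivAt.comp_hasDerivAt t (hline t))
      exact this
    have h2 : HasDerivAt (fun t : ℝ => t * (inner ℝ (Gf x) v : ℝ)) (inner ℝ (Gf x) v) t := by
      simpa using (hasDerivAt_id t).mul_const (inner ℝ (Gf x) v : ℝ)
    have h3 : HasDerivAt (fun t : ℝ => Lc / 2 * ‖v‖ ^ 2 * t ^ 2) (Lc / 2 * ‖v‖ ^ 2 * (2 * t)) t := by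
      simpa [mul_comm, mul_assoc] using ((hasDerivAt_pow 2 t).const_mul (Lc / 2 * ‖v‖ ^ 2))
    exact (h1.sub h2).sub h3
  have hanti : AntitoneOn φ (Set.Icc (0:ℝ) 1) := by
    apply antitoneOn_of_deriv_nonpos (convex_Icc 0 1)
    · exact fun t ht => ((hφ' t).differentiableAt.continuousAt).continuousWithinAt
    · intro t ht
      exact ((hφ' t).differentiableAt).differentiableWithinAt
    · intro t ht
      rw [(hφ' t).deriv]
      have ht0 : 0 ≤ t := (Set.mem_Ioo.1 (by simpa using ht)).1.le
      have hb : (inner ℝ (Gf (x + t • v)) v : ℝ) - inner ℝ (Gf x) v ≤ Lc * t * ‖v‖ ^ 2 := by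
        have := real_inner_le_norm (Gf (x + t • v) - Gf x) v
        have h2 := hLip (x + t • v) x
        simp only [add_sub_cancel_left] at h2
        have h3 : ‖t • v‖ = t * ‖v‖ := by rw [norm_smul, Real.norm_eq_abs, abs_of_nonneg ht0]
        rw [inner_sub_left] at this
        rw [h3] at h2
        nlinarith [mul_le_mul_of_nonneg_right h2 (norm_nonneg v), norm_nonneg v]
      nlinarith
  have := hanti (Set.left_mem_Icc.2 zero_le_one) (Set.right_mem_Icc.2 zero_le_one) zero_le_one
  simp only [hφ, zero_smul, add_zero, one_smul, one_pow, mul_one, zero_pow, zero_mul,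
    sub_zero, one_mul, mul_zero] at this
  linarith

/-- One-step descent inequality (Proposition 1 of the paper).  If `f` has an
`L`-Lipschitz gradient, the compressed stochastic gradient `g̃` satisfies the descent
condition `E⟪g̃, ∇f(x)⟫ ≥ N(∇f(x))^α + R` and the second-moment bound
`E‖g̃‖² ≤ ρ ‖∇f(x)‖_A² + σ²`, then
`η (N(∇f(x))^α − (Lηρ/2) ‖∇f(x)‖_A²) ≤ f(x) − E f(x − η g̃) − η R + L η² σ² / 2`. -/
theorem one_step_descent
    {d : ℕ} {Ω : Type*} [MeasurableSpace Ω] (μ : Measure Ω) [IsProbabilityMeasure μ]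
    (f : EuclideanSpace ℝ (Fin d) → ℝ)
    (Gf : EuclideanSpace ℝ (Fin d) → EuclideanSpace ℝ (Fin d))
    (Lc : ℝ) (hLc : 0 ≤ Lc)
    (hgrad : ∀ y, HasGradientAt f (Gf y) y)
    (hLip : ∀ y z, ‖Gf y - Gf z‖ ≤ Lc * ‖y - z‖)
    (x : EuclideanSpace ℝ (Fin d))
    (N : EuclideanSpace ℝ (Fin d) → ℝ)
    (hN_add : ∀ y z, N (y + z) ≤ N y + N z)
    (hN_smul : ∀ (c : ℝ) y, N (c • y) = |c| * N y)
    (hN_zero : ∀ y, N y = 0 ↔ y = 0)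
    (A : Matrix (Fin d) (Fin d) ℝ) (hA : A.PosDef)
    (α η ρ σ R : ℝ) (hα0 : 0 < α) (hα2 : α ≤ 2)
    (hη : 0 < η) (hρ : 0 < ρ) (hσ : 0 ≤ σ)
    (gt : Ω → EuclideanSpace ℝ (Fin d))
    (hgt_int : Integrable gt μ)
    (hgt2_int : Integrable (fun ω => ‖gt ω‖ ^ 2) μ)
    (hf_int : Integrable (fun ω => f (x - η • gt ω)) μ)
    (hdesc : N (Gf x) ^ α + R ≤ ∫ ω, (inner ℝ (gt ω) (Gf x) : ℝ) ∂μ)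
    (hsec : ∫ ω, ‖gt ω‖ ^ 2 ∂μ ≤ ρ * quadForm A (Gf x) + σ ^ 2) :
    η * (N (Gf x) ^ α - (Lc * η * ρ / 2) * quadForm A (Gf x))
      ≤ f x - (∫ ω, f (x - η • gt ω) ∂μ) - η * R + Lc * η ^ 2 * σ ^ 2 / 2 := by
  
  have hint1 : Integrable (fun ω => (inner ℝ (gt ω) (Gf x) : ℝ)) μ := by
    have := (innerSL ℝ (Gf x)).integrable_comp hgt_int
    refine this.congr (Filter.Eventually.of_forall fun ω => ?_)
    simp [real_inner_comm, mul_comm]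
  have hpt : ∀ ω, f (x - η • gt ω)
      ≤ f x - η * (inner ℝ (gt ω) (Gf x) : ℝ) + Lc / 2 * η ^ 2 * ‖gt ω‖ ^ 2 := by
    intro ω
    have := descent_lemma f Gf Lc hLc hgrad hLip x (-(η • gt ω))
    have h1 : (inner ℝ (Gf x) (-(η • gt ω)) : ℝ) = -(η * inner ℝ (gt ω) (Gf x)) := by
      rw [inner_neg_right, inner_smul_right, real_inner_comm]
    have h2 : ‖-(η • gt ω)‖ ^ 2 = η ^ 2 * ‖gt ω‖ ^ 2 := by
      rw [norm_neg, norm_smul, mul_pow, Real.norm_eq_abs, sq_abs]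
    rw [h1, h2] at this
    calc f (x - η • gt ω) = f (x + -(η • gt ω)) := by rw [sub_eq_add_neg]
    _ ≤ _ := this
    _ = _ := by ring
  have hmono : ∫ ω, f (x - η • gt ω) ∂μ
      ≤ ∫ ω, (f x - η * (inner ℝ (gt ω) (Gf x) : ℝ) + Lc / 2 * η ^ 2 * ‖gt ω‖ ^ 2) ∂μ := by
    refine integral_mono hf_int ?_ hpt
    exact ((integrable_const (f x)).sub (hint1.const_mul η)).add (hgt2_int.const_mul _)
  have hsub : Integrable (fun ω => f x - η * (inner ℝ (gt ω) (Gf x) : ℝ)) μ :=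
    (integrable_const (f x)).sub (hint1.const_mul η)
  have heq : (∫ ω, (f x - η * (inner ℝ (gt ω) (Gf x) : ℝ) + Lc / 2 * η ^ 2 * ‖gt ω‖ ^ 2) ∂μ)
      = f x - η * (∫ ω, (inner ℝ (gt ω) (Gf x) : ℝ) ∂μ)
        + Lc / 2 * η ^ 2 * (∫ ω, ‖gt ω‖ ^ 2 ∂μ) := by
    rw [integral_add hsub (hgt2_int.const_mul _),
      integral_sub (integrable_const (f x)) (hint1.const_mul η),
      integral_const, integral_const_mul, integral_const_mul]
    simp
  rw [heq] at hmono
  have k1 := mul_le_mul_of_nonneg_left hdesc hη.le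
  have k2 := mul_le_mul_of_nonneg_left hsec (by positivity : (0:ℝ) ≤ Lc / 2 * η ^ 2)
  nlinarith
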